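/- arXiv:1606.00578 — 6 statements merged into one kernel-verified Lean document; each statement's English description precedes it below -/
import Mathlib

section
/- For pairwise distinct complex numbers w, z_1, ..., z_{m+1}: g(w,z_1)·∏_{i=2}^{m+1} f(z_i,w) − ∑_{ℓ=2}^{m+1} g(w,z_ℓ)·g(z_ℓ,z_1)·∏_{i=2, i≠ℓ}^{m+1} f(z_i,z_ℓ) = g(w,z_1)·∏_{i=2}^{m+1} f(z_i,z_1). -/
noncomputable def fqB (q : ℝ) (z w : ℂ) : ℂ := (z - (q:ℂ)^2 * w) / (z - w)
noncomputable def gqB (q : ℝ) (z w : ℂ) : ℂ := -((1 - (q:ℂ)^2) * z) / (z - w)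

lemma keyB (q : ℝ) (w x y : ℂ) (hwx : w ≠ x) (hyw : y ≠ w) (hyx : y ≠ x) :
    gqB q w x * fqB q y w = gqB q w x * fqB q y x + gqB q w y * gqB q y x := by
  unfold gqB fqB
  have h1 : w - x ≠ 0 := sub_ne_zero.mpr hwx
  have h2 : y - w ≠ 0 := sub_ne_zero.mpr hyw
  have h3 : y - x ≠ 0 := sub_ne_zero.mpr hyx
  have h4 : w - y ≠ 0 := sub_ne_zero.mpr hyw.symm
  field_simp
  ring

lemma auxB (q : ℝ) (m : ℕ) (hm : 1 ≤ m) :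
    ∀ (w : ℂ) (z : ℕ → ℂ),
      Set.InjOn z (Set.Icc 1 (m + 1)) →
      (∀ i ∈ Finset.Icc 1 (m + 1), z i ≠ w) →
      gqB q w (z 1) * ∏ i ∈ Finset.Icc 2 (m + 1), fqB q (z i) w
        - ∑ l ∈ Finset.Icc 2 (m + 1),
            gqB q w (z l) * gqB q (z l) (z 1) *
              ∏ i ∈ (Finset.Icc 2 (m + 1)).erase l, fqB q (z i) (z l)
      = gqB q w (z 1) * ∏ i ∈ Finset.Icc 2 (m + 1), fqB q (z i) (z 1) := by
  induction m, hm using Nat.le_induction with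
  | base =>
    intro w z hinj hw
    have h1 : (1:ℕ) ∈ Finset.Icc 1 2 := by decide
    have h2 : (2:ℕ) ∈ Finset.Icc 1 2 := by decide
    have hz12 : z 2 ≠ z 1 := fun h => (by decide : (2:ℕ) ≠ 1)
      (hinj (by simp [Set.mem_Icc]) (by simp [Set.mem_Icc]) h)
    simp only [Finset.Icc_self, Finset.prod_singleton, Finset.sum_singleton,
      Finset.erase_singleton, Finset.prod_empty, mul_one]
    linear_combination keyB q w (z 1) (z 2) (hw 1 h1).symm (hw 2 h2) hz12
  | succ m hm ih =>
    intro w z hinj hw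
    have hIcc : Finset.Icc 2 (m + 1 + 1) = insert (m + 2) (Finset.Icc 2 (m + 1)) := by
      ext i; simp [Finset.mem_Icc]; omega
    have hnm : (m + 2) ∉ Finset.Icc 2 (m + 1) := by simp
    have hmemS : ∀ i : ℕ, 1 ≤ i → i ≤ m + 2 → i ∈ Set.Icc 1 (m + 1 + 1) := by
      intro i h1 h2; simp [Set.mem_Icc]; omega
    have hne : ∀ i j : ℕ, 1 ≤ i → i ≤ m + 2 → 1 ≤ j → j ≤ m + 2 → i ≠ j → z i ≠ z j := by
      intro i j hi1 hi2 hj1 hj2 hij h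
      exact hij (hinj (hmemS i hi1 hi2) (hmemS j hj1 hj2) h)
    have hinj' : Set.InjOn z (Set.Icc 1 (m + 1)) :=
      hinj.mono (Set.Icc_subset_Icc_right (by omega))
    have hw' : ∀ i ∈ Finset.Icc 1 (m + 1), z i ≠ w := by
      intro i hi
      simp only [Finset.mem_Icc] at hi
      exact hw i (by simp only [Finset.mem_Icc]; omega)
    have hzM : ∀ i ∈ Finset.Icc 1 (m + 1), z i ≠ z (m + 2) := by
      intro i hi
      simp only [Finset.mem_Icc] at hi
      exact hne i (m + 2) hi.1 (by omega) (by omega) le_rfl (by omega)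
    have IH1 := ih w z hinj' hw'
    have IH2 := ih (z (m + 2)) z hinj' hzM
    have hwM : z (m + 2) ≠ w := hw (m + 2) (by simp only [Finset.mem_Icc]; omega)
    have hw1 : w ≠ z 1 := (hw 1 (by simp only [Finset.mem_Icc]; omega)).symm
    have hM1 : z (m + 2) ≠ z 1 := hne (m + 2) 1 (by omega) le_rfl le_rfl (by omega) (by omega)
    rw [hIcc, Finset.prod_insert hnm, Finset.prod_insert hnm, Finset.sum_insert hnm,
      Finset.erase_insert hnm]
    have hsum : ∑ l ∈ Finset.Icc 2 (m + 1),
        gqB q w (z l) * gqB q (z l) (z 1) *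
          ∏ i ∈ (insert (m + 2) (Finset.Icc 2 (m + 1))).erase l, fqB q (z i) (z l)
        = fqB q (z (m + 2)) w * ∑ l ∈ Finset.Icc 2 (m + 1),
              gqB q w (z l) * gqB q (z l) (z 1) *
                ∏ i ∈ (Finset.Icc 2 (m + 1)).erase l, fqB q (z i) (z l)
          - gqB q w (z (m + 2)) * ∑ l ∈ Finset.Icc 2 (m + 1),
              gqB q (z (m + 2)) (z l) * gqB q (z l) (z 1) *
                ∏ i ∈ (Finset.Icc 2 (m + 1)).erase l, fqB q (z i) (z l) := by
      rw [Finset.mul_sum, Finset.mul_sum, ← Finset.sum_sub_distrib]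
      refine Finset.sum_congr rfl ?_
      intro l hl
      simp only [Finset.mem_Icc] at hl
      have hlM : l ≠ m + 2 := by omega
      rw [Finset.erase_insert_of_ne hlM.symm,
        Finset.prod_insert (fun h => hnm (Finset.erase_subset _ _ h))]
      have hk := keyB q w (z l) (z (m + 2))
        ((hw l (by simp only [Finset.mem_Icc]; omega)).symm) hwM
        (hne (m + 2) l (by omega) le_rfl (by omega) (by omega) hlM.symm)
      linear_combination
        -(gqB q (z l) (z 1) * ∏ i ∈ (Finset.Icc 2 (m + 1)).erase l, fqB q (z i) (z l)) * hk
    rw [hsum]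
    linear_combination fqB q (z (m + 2)) w * IH1 - gqB q w (z (m + 2)) * IH2
      + (∏ i ∈ Finset.Icc 2 (m + 1), fqB q (z i) (z 1)) * keyB q w (z 1) (z (m + 2)) hw1 hwM hM1

theorem stmt2 (q : ℝ) (hq : 0 < q) (hq1 : q < 1) (m : ℕ) (hm : 1 ≤ m)
    (w : ℂ) (z : ℕ → ℂ)
    (hinj : Set.InjOn z (Set.Icc 1 (m + 1)))
    (hw : ∀ i ∈ Finset.Icc 1 (m + 1), z i ≠ w) :
    gqB q w (z 1) * ∏ i ∈ Finset.Icc 2 (m + 1), fqB q (z i) w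
      - ∑ l ∈ Finset.Icc 2 (m + 1),
          gqB q w (z l) * gqB q (z l) (z 1) *
            ∏ i ∈ (Finset.Icc 2 (m + 1)).erase l, fqB q (z i) (z l)
    = gqB q w (z 1) * ∏ i ∈ Finset.Icc 2 (m + 1), fqB q (z i) (z 1) := by
  exact auxB q m hm w z hinj hw
end

section
/- For pairwise distinct complex numbers w, z_1, ..., z_{m+1}: g(z_1,w)·∏_{i=2}^{m+1} f(z_i,w) + ∑_{ℓ=2}^{m+1} g(z_ℓ,w)·g(z_1,z_ℓ)·∏_{i=2, i≠ℓ}^{m+1} f(z_i,z_ℓ) = g(z_1,w)·∏_{i=2}^{m+1} f(z_i,z_1). -/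
lemma keyB_s3 (q : ℝ) (x u a : ℂ) (hxu : x ≠ u) (hau : a ≠ u) (hax : a ≠ x) :
    gqB q x u * fqB q a u + gqB q a u * gqB q x a = gqB q x u * fqB q a x := by
  have h1 : x - u ≠ 0 := sub_ne_zero.mpr hxu
  have h2 : a - u ≠ 0 := sub_ne_zero.mpr hau
  have h3 : a - x ≠ 0 := sub_ne_zero.mpr hax
  have h4 : x - a ≠ 0 := sub_ne_zero.mpr hax.symm
  unfold gqB fqB
  field_simp
  ring

lemma genB (q : ℝ) (z : ℕ → ℂ) (S : Finset ℕ) :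
    ∀ (x w : ℂ), x ≠ w → (∀ i ∈ S, z i ≠ w) → (∀ i ∈ S, z i ≠ x) →
    (∀ i ∈ S, ∀ j ∈ S, i ≠ j → z i ≠ z j) →
    gqB q x w * ∏ i ∈ S, fqB q (z i) w
      + ∑ l ∈ S, gqB q (z l) w * gqB q x (z l) * ∏ i ∈ S.erase l, fqB q (z i) (z l)
    = gqB q x w * ∏ i ∈ S, fqB q (z i) x := by
  induction S using Finset.induction_on with
  | empty => intro x w _ _ _ _; simp
  | insert a S ha IH =>
    intro x w hxw hw hx hpd
    have haw : z a ≠ w := hw a (Finset.mem_insert_self a S)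
    have hax : z a ≠ x := hx a (Finset.mem_insert_self a S)
    have hw' : ∀ i ∈ S, z i ≠ w := fun i hi => hw i (Finset.mem_insert_of_mem hi)
    have hx' : ∀ i ∈ S, z i ≠ x := fun i hi => hx i (Finset.mem_insert_of_mem hi)
    have hpd' : ∀ i ∈ S, ∀ j ∈ S, i ≠ j → z i ≠ z j := fun i hi j hj hij =>
      hpd i (Finset.mem_insert_of_mem hi) j (Finset.mem_insert_of_mem hj) hij
    have hza : ∀ i ∈ S, z i ≠ z a := fun i hi =>
      hpd i (Finset.mem_insert_of_mem hi) a (Finset.mem_insert_self a S)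
        (fun h => ha (h ▸ hi))
    have IH1 := IH x w hxw hw' hx' hpd'
    have IH2 := IH x (z a) hax.symm hza hx' hpd'
    have keyA := keyB_s3 q x w (z a) hxw haw hax
    rw [Finset.prod_insert ha, Finset.prod_insert ha, Finset.sum_insert ha,
      Finset.erase_insert ha]
    have hsum : ∑ l ∈ S, gqB q (z l) w * gqB q x (z l) *
          ∏ i ∈ (insert a S).erase l, fqB q (z i) (z l)
        = fqB q (z a) w *
            (∑ l ∈ S, gqB q (z l) w * gqB q x (z l) * ∏ i ∈ S.erase l, fqB q (z i) (z l))
          + gqB q (z a) w *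
            (∑ l ∈ S, gqB q (z l) (z a) * gqB q x (z l) * ∏ i ∈ S.erase l, fqB q (z i) (z l)) := by
      rw [Finset.mul_sum, Finset.mul_sum, ← Finset.sum_add_distrib]
      apply Finset.sum_congr rfl
      intro l hl
      have hla : l ≠ a := fun h => ha (h ▸ hl)
      rw [Finset.erase_insert_of_ne hla.symm,
        Finset.prod_insert (fun h => ha (Finset.mem_of_mem_erase h))]
      have hk := keyB_s3 q (z l) w (z a) (hw' l hl) haw (hza l hl).symm
      linear_combination -(gqB q x (z l) * ∏ i ∈ S.erase l, fqB q (z i) (z l)) * hk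
    rw [hsum]
    linear_combination fqB q (z a) w * IH1 + gqB q (z a) w * IH2 +
      (∏ i ∈ S, fqB q (z i) x) * keyA

theorem stmt3 (q : ℝ) (hq : 0 < q) (hq1 : q < 1) (m : ℕ) (hm : 1 ≤ m)
    (w : ℂ) (z : ℕ → ℂ)
    (hinj : Set.InjOn z (Set.Icc 1 (m + 1)))
    (hw : ∀ i ∈ Finset.Icc 1 (m + 1), z i ≠ w) :
    gqB q (z 1) w * ∏ i ∈ Finset.Icc 2 (m + 1), fqB q (z i) w
      + ∑ l ∈ Finset.Icc 2 (m + 1),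
          gqB q (z l) w * gqB q (z 1) (z l) *
            ∏ i ∈ (Finset.Icc 2 (m + 1)).erase l, fqB q (z i) (z l)
    = gqB q (z 1) w * ∏ i ∈ Finset.Icc 2 (m + 1), fqB q (z i) (z 1) := by
  have hmem : ∀ i ∈ Finset.Icc 2 (m + 1), i ∈ Set.Icc 1 (m + 1) := by
    intro i hi
    rw [Finset.mem_Icc] at hi
    exact Set.mem_Icc.mpr ⟨le_trans (by norm_num) hi.1, hi.2⟩
  have h1mem : (1 : ℕ) ∈ Set.Icc 1 (m + 1) := Set.mem_Icc.mpr ⟨le_refl 1, by omega⟩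
  apply genB q z (Finset.Icc 2 (m + 1)) (z 1) w
  · exact hw 1 (Finset.mem_Icc.mpr ⟨le_refl 1, by omega⟩)
  · intro i hi
    exact hw i (Finset.mem_Icc.mpr ⟨by have := (Finset.mem_Icc.mp hi).1; omega,
      (Finset.mem_Icc.mp hi).2⟩)
  · intro i hi heq
    have : i = 1 := hinj (hmem i hi) h1mem heq
    have := (Finset.mem_Icc.mp hi).1
    omega
  · intro i hi j hj hij heq
    exact hij (hinj (hmem i hi) (hmem j hj) heq)
end

section
/- For pairwise distinct complex numbers z_1,...,z_m and any ℓ with 1≤ℓ≤m: ∏_{i=1}^{ℓ-1} f(z_i,z_ℓ) + ∑_{t=ℓ+1}^{m} g(z_ℓ,z_t)·∏_{i=1, i≠ℓ}^{t-1} f(z_i,z_ℓ) = ∏_{i=1, i≠ℓ}^{m} f(z_i,z_ℓ). -/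
lemma keyB_s4 (q : ℝ) (a b : ℂ) (h : a ≠ b) : 1 + gqB q b a = fqB q a b := by
  have h' : a - b ≠ 0 := sub_ne_zero.mpr h
  have h'' : b - a ≠ 0 := sub_ne_zero.mpr (Ne.symm h)
  unfold fqB gqB
  field_simp
  ring

lemma mainB (q : ℝ) (z : ℕ → ℂ) (l : ℕ) (hl1 : 1 ≤ l) (n : ℕ) (hln : l ≤ n)
    (hz : ∀ t ∈ Finset.Icc (l + 1) n, z t ≠ z l) :
    ∏ i ∈ Finset.Icc 1 (l - 1), fqB q (z i) (z l)
      + ∑ t ∈ Finset.Icc (l + 1) n,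
          gqB q (z l) (z t) *
            ∏ i ∈ (Finset.Icc 1 (t - 1)).erase l, fqB q (z i) (z l)
    = ∏ i ∈ (Finset.Icc 1 n).erase l, fqB q (z i) (z l) := by
  induction n, hln using Nat.le_induction with
  | base =>
      have h1 : Finset.Icc (l + 1) l = ∅ := by
        apply Finset.Icc_eq_empty; omega
      have h2 : (Finset.Icc 1 l).erase l = Finset.Icc 1 (l - 1) := by
        ext x; simp [Finset.mem_erase]; omega
      rw [h1, h2]; simp
  | succ n hn ih =>
      have hz' : ∀ t ∈ Finset.Icc (l + 1) n, z t ≠ z l := by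
        intro t ht; apply hz; simp at ht ⊢; omega
      have hnl : z (n + 1) ≠ z l := by apply hz; simp; omega
      have hs : Finset.Icc (l + 1) (n + 1) = insert (n + 1) (Finset.Icc (l + 1) n) := by
        ext x; simp [Finset.mem_insert]; omega
      have hni : (n + 1 : ℕ) ∉ Finset.Icc (l + 1) n := by simp
      rw [hs, Finset.sum_insert hni]
      have he : (Finset.Icc 1 (n + 1 - 1)).erase l = (Finset.Icc 1 n).erase l := by
        norm_num
      have hr : (Finset.Icc 1 (n + 1)).erase l = insert (n + 1) ((Finset.Icc 1 n).erase l) := by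
        ext x; simp [Finset.mem_erase, Finset.mem_insert]; omega
      have hni2 : (n + 1 : ℕ) ∉ (Finset.Icc 1 n).erase l := by simp
      rw [hr, Finset.prod_insert hni2, he]
      have := ih hz'
      calc ∏ i ∈ Finset.Icc 1 (l - 1), fqB q (z i) (z l)
            + (gqB q (z l) (z (n + 1)) * ∏ i ∈ (Finset.Icc 1 n).erase l, fqB q (z i) (z l)
              + ∑ t ∈ Finset.Icc (l + 1) n, gqB q (z l) (z t) *
                  ∏ i ∈ (Finset.Icc 1 (t - 1)).erase l, fqB q (z i) (z l))
          = (∏ i ∈ Finset.Icc 1 (l - 1), fqB q (z i) (z l)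
              + ∑ t ∈ Finset.Icc (l + 1) n, gqB q (z l) (z t) *
                  ∏ i ∈ (Finset.Icc 1 (t - 1)).erase l, fqB q (z i) (z l))
            + gqB q (z l) (z (n + 1)) * ∏ i ∈ (Finset.Icc 1 n).erase l, fqB q (z i) (z l) := by
            ring
        _ = (1 + gqB q (z l) (z (n + 1))) * ∏ i ∈ (Finset.Icc 1 n).erase l, fqB q (z i) (z l) := by
            rw [this]; ring
        _ = fqB q (z (n + 1)) (z l) * ∏ i ∈ (Finset.Icc 1 n).erase l, fqB q (z i) (z l) := by
            rw [keyB_s4 q _ _ hnl]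

theorem stmt4 (q : ℝ) (hq : 0 < q) (hq1 : q < 1) (m : ℕ)
    (z : ℕ → ℂ) (hinj : Set.InjOn z (Set.Icc 1 m))
    (l : ℕ) (hl : l ∈ Finset.Icc 1 m) :
    ∏ i ∈ Finset.Icc 1 (l - 1), fqB q (z i) (z l)
      + ∑ t ∈ Finset.Icc (l + 1) m,
          gqB q (z l) (z t) *
            ∏ i ∈ (Finset.Icc 1 (t - 1)).erase l, fqB q (z i) (z l)
    = ∏ i ∈ (Finset.Icc 1 m).erase l, fqB q (z i) (z l) := by
  simp only [Finset.mem_Icc] at hl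
  apply mainB q z l hl.1 m hl.2
  intro t ht
  simp only [Finset.mem_Icc] at ht
  intro h
  have := hinj (Set.mem_Icc.mpr ⟨by omega, ht.2⟩) (Set.mem_Icc.mpr ⟨hl.1, hl.2⟩) h
  omega
end

section
/- For t≥2 and pairwise distinct nonzero complex numbers w, z_1, ..., z_t: (-1)^{t-1}·∏_{s=1}^{t-1} g(z_s,z_{s+1}) + (g(w,z_t)/g(z_t,z_1))·∏_{s=1}^{t-1} g(z_{s+1},z_s) = (g(w,z_t)/g(w,z_1))·∏_{s=1}^{t-1} g(z_{s+1},z_s). -/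
lemma gqB_eq (q : ℝ) (z w : ℂ) : gqB q z w = (-(1 - (q:ℂ)^2)) * z / (z - w) := by
  unfold gqB; ring_nf

lemma shift_prod (z : ℕ → ℂ) : ∀ n : ℕ,
    z 1 * ∏ s ∈ Finset.Icc 1 n, z (s+1) = z (n+1) * ∏ s ∈ Finset.Icc 1 n, z s := by
  intro n
  induction n with
  | zero => simp
  | succ n ih =>
    rw [Finset.prod_Icc_succ_top (by omega), Finset.prod_Icc_succ_top (by omega),
      ← mul_assoc, ih]
    ring

lemma key (c w z1 zt P1 P2 D : ℂ) (n : ℕ) (hc : c ≠ 0) (hz1 : z1 ≠ 0) (hzt : zt ≠ 0)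
    (hD : D ≠ 0) (hw1 : w - z1 ≠ 0) (hwt : w - zt ≠ 0) (ht1 : zt - z1 ≠ 0) (hw : w ≠ 0)
    (hrel : z1 * P2 = zt * P1) :
    (-1:ℂ)^n * (c^n * P1 / D) + (c*w/(w-zt))/(c*zt/(zt-z1)) * ((-c)^n * P2 / D)
      = (c*w/(w-zt))/(c*w/(w-z1)) * ((-c)^n * P2 / D) := by
  have h1 : (c*w/(w-zt))/(c*zt/(zt-z1)) = w*(zt-z1)/((w-zt)*zt) := by
    field_simp
  have h2 : (c*w/(w-zt))/(c*w/(w-z1)) = (w-z1)/(w-zt) := by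
    field_simp
  rw [h1, h2, neg_pow]
  field_simp
  ring_nf
  linear_combination (-((-1:ℂ)^n * c^n * (w-zt))) * hrel

theorem stmt6 (q : ℝ) (hq : 0 < q) (hq1 : q < 1) (t : ℕ) (ht : 2 ≤ t)
    (w : ℂ) (z : ℕ → ℂ)
    (hw : w ≠ 0) (hz : ∀ i ∈ Finset.Icc 1 t, z i ≠ 0)
    (hwz : ∀ i ∈ Finset.Icc 1 t, z i ≠ w)
    (hinj : Set.InjOn z (Set.Icc 1 t)) :
    (-1 : ℂ)^(t - 1) * (∏ s ∈ Finset.Icc 1 (t - 1), gqB q (z s) (z (s + 1)))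
      + gqB q w (z t) / gqB q (z t) (z 1) *
          ∏ s ∈ Finset.Icc 1 (t - 1), gqB q (z (s + 1)) (z s)
    = gqB q w (z t) / gqB q w (z 1) *
        ∏ s ∈ Finset.Icc 1 (t - 1), gqB q (z (s + 1)) (z s) := by
  set c : ℂ := -(1 - (q:ℂ)^2) with hcdef
  have hq2 : (q:ℂ)^2 ≠ 1 := by
    intro h
    have : (q:ℝ)^2 = 1 := by exact_mod_cast h
    nlinarith
  have hc : c ≠ 0 := by
    simp only [hcdef, neg_ne_zero, sub_ne_zero]
    exact fun h => hq2 h.symm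
  -- membership facts
  have h1t : (1:ℕ) ∈ Finset.Icc 1 t := by simp; omega
  have htt : t ∈ Finset.Icc 1 t := by simp; omega
  have hz1 : z 1 ≠ 0 := hz 1 h1t
  have hzt : z t ≠ 0 := hz t htt
  have hwz1 : w - z 1 ≠ 0 := sub_ne_zero.mpr (fun h => hwz 1 h1t h.symm)
  have hwzt : w - z t ≠ 0 := sub_ne_zero.mpr (fun h => hwz t htt h.symm)
  have hzt1 : z t - z 1 ≠ 0 := by
    refine sub_ne_zero.mpr (fun h => ?_)
    have := hinj (by constructor <;> omega) (by constructor <;> omega) h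
    omega
  -- denominators in the products
  have hd : ∀ s ∈ Finset.Icc 1 (t-1), z s - z (s+1) ≠ 0 := by
    intro s hs
    simp only [Finset.mem_Icc] at hs
    refine sub_ne_zero.mpr (fun h => ?_)
    have := hinj (Set.mem_Icc.mpr ⟨by omega, by omega⟩)
      (Set.mem_Icc.mpr ⟨by omega, by omega⟩) h
    omega
  set P1 : ℂ := ∏ s ∈ Finset.Icc 1 (t-1), z s with hP1
  set P2 : ℂ := ∏ s ∈ Finset.Icc 1 (t-1), z (s+1) with hP2
  set D : ℂ := ∏ s ∈ Finset.Icc 1 (t-1), (z s - z (s+1)) with hD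
  have hDne : D ≠ 0 := Finset.prod_ne_zero_iff.mpr hd
  have card : (Finset.Icc 1 (t-1)).card = t - 1 := by
    rw [Nat.card_Icc]; omega
  have hA : ∏ s ∈ Finset.Icc 1 (t-1), gqB q (z s) (z (s+1)) = c^(t-1) * P1 / D := by
    rw [Finset.prod_congr rfl (fun s _ => gqB_eq q (z s) (z (s+1))),
      Finset.prod_div_distrib, Finset.prod_mul_distrib, Finset.prod_const, card, hP1, hD]
  have hB : ∏ s ∈ Finset.Icc 1 (t-1), gqB q (z (s+1)) (z s) = (-c)^(t-1) * P2 / D := by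
    have step : ∀ s ∈ Finset.Icc 1 (t-1), gqB q (z (s+1)) (z s) = -c * z (s+1) / (z s - z (s+1)) := by
      intro s _
      rw [gqB_eq, show z (s+1) - z s = -(z s - z (s+1)) by ring, div_neg]
      ring
    rw [Finset.prod_congr rfl step, Finset.prod_div_distrib, Finset.prod_mul_distrib,
      Finset.prod_const, card, hP2, hD]
  have hrel : z 1 * P2 = z t * P1 := by
    have := shift_prod z (t-1)
    rwa [show t - 1 + 1 = t by omega] at this
  rw [hA, hB, gqB_eq, gqB_eq, gqB_eq]
  exact key c w (z 1) (z t) P1 P2 D (t-1) hc hz1 hzt hDne hwz1 hwzt hzt1 hw hrel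
end

section
/- With Y_i(z,w) = f(z,w)^{-1}(R_i + g(z,w)) on U^{⊗k}, for 1≤i≤k−2 the Yang–Baxter relation Y_i(z_2,z_3) Y_{i+1}(z_1,z_3) Y_i(z_1,z_2) = Y_{i+1}(z_1,z_2) Y_i(z_1,z_3) Y_{i+1}(z_2,z_3) holds, whenever z_1, z_2, z_3 are pairwise distinct and all f-values appearing are nonzero. -/
/-- The Hecke R-operator on `ℂ^r ⊗ ℂ^r` as a matrix (coefficient of `u_p` in `R u_{p'}`). -/
noncomputable def heckeR (q : ℝ) (r : ℕ) : Matrix (Fin r × Fin r) (Fin r × Fin r) ℂ :=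
  fun p p' =>
    if p'.1 = p'.2 then (if p = p' then 1 else 0)
    else if p'.2 < p'.1 then (if p = (p'.2, p'.1) then (q : ℂ) else 0)
    else (if p = p' then (1 - (q:ℂ)^2) else 0) + (if p = (p'.2, p'.1) then (q : ℂ) else 0)

open Classical in
/-- `R_i`: the Hecke R-operator acting on the tensor factors `i`, `i+1` of `(ℂ^r)^{⊗k}`. -/
noncomputable def RmatK (q : ℝ) (r k : ℕ) (i : ℕ) (hi : i + 1 < k) :
    Matrix (Fin k → Fin r) (Fin k → Fin r) ℂ :=
  fun p p' =>
    heckeR q r (p ⟨i, Nat.lt_of_succ_lt hi⟩, p ⟨i + 1, hi⟩)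
        (p' ⟨i, Nat.lt_of_succ_lt hi⟩, p' ⟨i + 1, hi⟩) *
      (if ∀ j : Fin k, (j : ℕ) ≠ i → (j : ℕ) ≠ i + 1 → p j = p' j then 1 else 0)

noncomputable def Ac (q : ℝ) {r : ℕ} (u v : Fin r) : ℂ :=
  if u = v then 1 else if v < u then 0 else (1 - (q:ℂ)^2)

noncomputable def Bc (q : ℝ) {r : ℕ} (u v : Fin r) : ℂ :=
  if u = v then 0 else (q : ℂ)

open Classical

noncomputable def dl {α : Type*} (a b : α) : ℂ := if a = b then 1 else 0

lemma dl_refl {α : Type*} (a : α) : dl a a = 1 := by simp [dl]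
lemma dl_of_ne {α : Type*} {a b : α} (h : a ≠ b) : dl a b = 0 := by simp [dl, h]

lemma heckeR_eq (q : ℝ) (r : ℕ) (p p' : Fin r × Fin r) :
    heckeR q r p p' = Ac q p'.1 p'.2 * dl p p' + Bc q p'.1 p'.2 * dl p (p'.2, p'.1) := by
  obtain ⟨x, y⟩ := p'
  unfold heckeR Ac Bc dl
  by_cases hxy : x = y
  · subst hxy; simp
  · simp only [hxy, if_false]
    by_cases h2 : y < x <;> simp [h2] <;> ring

/-- swap the values at positions i, i+1 -/
def swp {k r : ℕ} (i : ℕ) (hi : i + 1 < k) (p : Fin k → Fin r) : Fin k → Fin r :=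
  fun j => if j = ⟨i, Nat.lt_of_succ_lt hi⟩ then p ⟨i + 1, hi⟩
    else if j = ⟨i + 1, hi⟩ then p ⟨i, Nat.lt_of_succ_lt hi⟩ else p j

lemma swp_app0 {k r : ℕ} (i : ℕ) (hi : i + 1 < k) (p : Fin k → Fin r) (h : i < k) :
    swp i hi p ⟨i, h⟩ = p ⟨i + 1, hi⟩ := by simp [swp]

lemma swp_app1 {k r : ℕ} (i : ℕ) (hi : i + 1 < k) (p : Fin k → Fin r) (h : i + 1 < k) :
    swp i hi p ⟨i + 1, h⟩ = p ⟨i, Nat.lt_of_succ_lt hi⟩ := by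
  have : (⟨i+1, h⟩ : Fin k) ≠ ⟨i, Nat.lt_of_succ_lt hi⟩ := by simp
  simp [swp, this]

lemma swp_app_other {k r : ℕ} (i : ℕ) (hi : i + 1 < k) (p : Fin k → Fin r) (j : Fin k)
    (h0 : (j : ℕ) ≠ i) (h1 : (j : ℕ) ≠ i + 1) : swp i hi p j = p j := by
  have e0 : j ≠ ⟨i, Nat.lt_of_succ_lt hi⟩ := by simp [Fin.ext_iff, h0]
  have e1 : j ≠ ⟨i + 1, hi⟩ := by simp [Fin.ext_iff, h1]
  simp [swp, e0, e1]

lemma swp_swp {k r : ℕ} (i : ℕ) (hi : i + 1 < k) (p : Fin k → Fin r) :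
    swp i hi (swp i hi p) = p := by
  funext j
  by_cases h0 : (j : ℕ) = i
  · have : j = (⟨i, Nat.lt_of_succ_lt hi⟩ : Fin k) := by simp [Fin.ext_iff, h0]
    subst this
    rw [swp_app0, swp_app1]
  · by_cases h1 : (j : ℕ) = i + 1
    · have : j = (⟨i + 1, hi⟩ : Fin k) := by simp [Fin.ext_iff, h1]
      subst this
      rw [swp_app1, swp_app0]
    · rw [swp_app_other i hi _ j h0 h1, swp_app_other i hi _ j h0 h1]

lemma RmatK_apply (q : ℝ) (r k : ℕ) (i : ℕ) (hi : i + 1 < k) (p p' : Fin k → Fin r) :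
    RmatK q r k i hi p p' =
      Ac q (p' ⟨i, Nat.lt_of_succ_lt hi⟩) (p' ⟨i + 1, hi⟩) * dl p p' +
      Bc q (p' ⟨i, Nat.lt_of_succ_lt hi⟩) (p' ⟨i + 1, hi⟩) * dl p (swp i hi p') := by
  unfold RmatK
  rw [heckeR_eq]
  set x := p' ⟨i, Nat.lt_of_succ_lt hi⟩
  set y := p' ⟨i + 1, hi⟩
  have key1 : dl (p ⟨i, Nat.lt_of_succ_lt hi⟩, p ⟨i + 1, hi⟩) (x, y) *
      (if ∀ j : Fin k, (j : ℕ) ≠ i → (j : ℕ) ≠ i + 1 → p j = p' j then 1 else 0) = dl p p' := by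
    unfold dl
    by_cases hfull : p = p'
    · subst hfull
      simp [x, y]
    · rw [if_neg hfull]
      by_cases h1 : (p ⟨i, Nat.lt_of_succ_lt hi⟩, p ⟨i + 1, hi⟩) = (x, y)
      · by_cases h2 : ∀ j : Fin k, (j : ℕ) ≠ i → (j : ℕ) ≠ i + 1 → p j = p' j
        · exfalso; apply hfull; funext j
          by_cases hj0 : (j : ℕ) = i
          · have : j = (⟨i, Nat.lt_of_succ_lt hi⟩ : Fin k) := by simp [Fin.ext_iff, hj0]
            subst this; exact (Prod.mk.injEq _ _ _ _ ▸ h1).1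
          · by_cases hj1 : (j : ℕ) = i + 1
            · have : j = (⟨i + 1, hi⟩ : Fin k) := by simp [Fin.ext_iff, hj1]
              subst this; exact (Prod.mk.injEq _ _ _ _ ▸ h1).2
            · exact h2 j hj0 hj1
        · simp [h2]
      · simp [h1]
  have key2 : dl (p ⟨i, Nat.lt_of_succ_lt hi⟩, p ⟨i + 1, hi⟩) (y, x) *
      (if ∀ j : Fin k, (j : ℕ) ≠ i → (j : ℕ) ≠ i + 1 → p j = p' j then 1 else 0) =
      dl p (swp i hi p') := by
    have hx : swp i hi p' ⟨i, Nat.lt_of_succ_lt hi⟩ = y := swp_app0 i hi p' _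
    have hy : swp i hi p' ⟨i + 1, hi⟩ = x := swp_app1 i hi p' _
    have hrest : (∀ j : Fin k, (j : ℕ) ≠ i → (j : ℕ) ≠ i + 1 → p j = p' j) ↔
        (∀ j : Fin k, (j : ℕ) ≠ i → (j : ℕ) ≠ i + 1 → p j = swp i hi p' j) := by
      constructor <;> intro h j hj0 hj1 <;> have := h j hj0 hj1 <;>
        rw [swp_app_other i hi p' j hj0 hj1] at * <;> exact this
    calc dl (p ⟨i, Nat.lt_of_succ_lt hi⟩, p ⟨i + 1, hi⟩) (y, x) *
        (if ∀ j : Fin k, (j : ℕ) ≠ i → (j : ℕ) ≠ i + 1 → p j = p' j then 1 else 0)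
        = dl (p ⟨i, Nat.lt_of_succ_lt hi⟩, p ⟨i + 1, hi⟩)
            (swp i hi p' ⟨i, Nat.lt_of_succ_lt hi⟩, swp i hi p' ⟨i + 1, hi⟩) *
          (if ∀ j : Fin k, (j : ℕ) ≠ i → (j : ℕ) ≠ i + 1 → p j = swp i hi p' j
            then 1 else 0) := by rw [hx, hy, if_congr hrest rfl rfl]
      _ = dl p (swp i hi p') := by
          have := key1  -- dummy
          clear this
          -- reuse the same argument with p' replaced by swp i hi p'
          unfold dl
          by_cases hfull : p = swp i hi p'
          · subst hfull; simp
          · rw [if_neg hfull]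
            by_cases h1 : (p ⟨i, Nat.lt_of_succ_lt hi⟩, p ⟨i + 1, hi⟩) =
                (swp i hi p' ⟨i, Nat.lt_of_succ_lt hi⟩, swp i hi p' ⟨i + 1, hi⟩)
            · by_cases h2 : ∀ j : Fin k, (j : ℕ) ≠ i → (j : ℕ) ≠ i + 1 → p j = swp i hi p' j
              · exfalso; apply hfull; funext j
                by_cases hj0 : (j : ℕ) = i
                · have : j = (⟨i, Nat.lt_of_succ_lt hi⟩ : Fin k) := by simp [Fin.ext_iff, hj0]
                  subst this; exact (Prod.mk.injEq _ _ _ _ ▸ h1).1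
                · by_cases hj1 : (j : ℕ) = i + 1
                  · have : j = (⟨i + 1, hi⟩ : Fin k) := by simp [Fin.ext_iff, hj1]
                    subst this; exact (Prod.mk.injEq _ _ _ _ ▸ h1).2
                  · exact h2 j hj0 hj1
              · simp [h2]
            · simp [h1]
  rw [add_mul, mul_assoc, mul_assoc, key1, key2]

lemma mul_RmatK (q : ℝ) (r k : ℕ) (i : ℕ) (hi : i + 1 < k)
    (M : Matrix (Fin k → Fin r) (Fin k → Fin r) ℂ) (p p' : Fin k → Fin r) :
    (M * RmatK q r k i hi) p p' =
      Ac q (p' ⟨i, Nat.lt_of_succ_lt hi⟩) (p' ⟨i + 1, hi⟩) * M p p' +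
      Bc q (p' ⟨i, Nat.lt_of_succ_lt hi⟩) (p' ⟨i + 1, hi⟩) * M p (swp i hi p') := by
  rw [Matrix.mul_apply]
  simp only [RmatK_apply, dl]
  simp only [mul_add, mul_ite, mul_one, mul_zero, Finset.sum_add_distrib]
  rw [Finset.sum_ite_eq' Finset.univ p' (fun x => M p x * Ac q _ _),
      Finset.sum_ite_eq' Finset.univ (swp i hi p') (fun x => M p x * Bc q _ _)]
  simp [mul_comm]

lemma Hco1 (q : ℝ) {r : ℕ} (u v : Fin r) :
    Ac q u v * Ac q u v + Bc q u v * Bc q v u = (1 - (q:ℂ)^2) * Ac q u v + (q:ℂ)^2 := by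
  unfold Ac Bc
  split_ifs <;> first | ring1 | (exfalso; omega)

lemma Hco2 (q : ℝ) {r : ℕ} (u v : Fin r) :
    Ac q u v * Bc q u v + Bc q u v * Ac q v u = (1 - (q:ℂ)^2) * Bc q u v := by
  unfold Ac Bc
  split_ifs <;> first | ring1 | (exfalso; omega)

lemma one_apply_dl {k r : ℕ} (p p' : Fin k → Fin r) :
    (1 : Matrix (Fin k → Fin r) (Fin k → Fin r) ℂ) p p' = dl p p' := by
  simp [dl, Matrix.one_apply]

lemma hecke_big (q : ℝ) (r k : ℕ) (i : ℕ) (hi : i + 1 < k) :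
    RmatK q r k i hi * RmatK q r k i hi =
      (1 - (q:ℂ)^2) • RmatK q r k i hi + (q:ℂ)^2 • 1 := by
  ext p p'
  rw [mul_RmatK]
  rw [RmatK_apply, RmatK_apply]
  rw [Matrix.add_apply, Matrix.smul_apply, Matrix.smul_apply, one_apply_dl, RmatK_apply]
  rw [swp_app0, swp_app1, swp_swp]
  set x := p' ⟨i, Nat.lt_of_succ_lt hi⟩
  set y := p' ⟨i + 1, hi⟩
  simp only [smul_eq_mul]
  linear_combination (Hco1 q x y) * dl p p' + (Hco2 q x y) * dl p (swp i hi p')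

/-- update the three values at positions i, i+1, i+2 -/
def upd3 {k r : ℕ} (i : ℕ) (p : Fin k → Fin r) (u v w : Fin r) : Fin k → Fin r :=
  fun j => if (j : ℕ) = i then u else if (j : ℕ) = i + 1 then v
    else if (j : ℕ) = i + 2 then w else p j

lemma upd3_app0 {k r : ℕ} (i : ℕ) (p : Fin k → Fin r) (u v w : Fin r) (h : i < k) :
    upd3 i p u v w ⟨i, h⟩ = u := by simp [upd3]

lemma upd3_app1 {k r : ℕ} (i : ℕ) (p : Fin k → Fin r) (u v w : Fin r) (h : i + 1 < k) :
    upd3 i p u v w ⟨i + 1, h⟩ = v := by simp [upd3]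

lemma upd3_app2 {k r : ℕ} (i : ℕ) (p : Fin k → Fin r) (u v w : Fin r) (h : i + 1 + 1 < k) :
    upd3 i p u v w ⟨i + 1 + 1, h⟩ = w := by
  simp [upd3]
  intro h'
  exact absurd h' (by omega)

lemma upd3_app2' {k r : ℕ} (i : ℕ) (p : Fin k → Fin r) (u v w : Fin r) (h : i + 2 < k) :
    upd3 i p u v w ⟨i + 2, h⟩ = w := by simp [upd3]

lemma upd3_self {k r : ℕ} (i : ℕ) (p : Fin k → Fin r) (h0 : i < k) (h1 : i + 1 < k)
    (h2 : i + 2 < k) : upd3 i p (p ⟨i, h0⟩) (p ⟨i + 1, h1⟩) (p ⟨i + 2, h2⟩) = p := by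
  funext j
  unfold upd3
  split_ifs with g0 g1 g2
  · congr 1; exact Fin.ext g0.symm
  · congr 1; exact Fin.ext g1.symm
  · congr 1; exact Fin.ext g2.symm
  · rfl

lemma swp_upd3_left {k r : ℕ} (i : ℕ) (p : Fin k → Fin r) (u v w : Fin r)
    (h : i + 1 < k) : swp i h (upd3 i p u v w) = upd3 i p v u w := by
  funext j
  by_cases g0 : (j : ℕ) = i
  · have hj : j = (⟨i, Nat.lt_of_succ_lt h⟩ : Fin k) := by simp [Fin.ext_iff, g0]
    subst hj
    rw [swp_app0, upd3_app1, upd3_app0]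
  · by_cases g1 : (j : ℕ) = i + 1
    · have hj : j = (⟨i + 1, h⟩ : Fin k) := by simp [Fin.ext_iff, g1]
      subst hj
      rw [swp_app1, upd3_app0, upd3_app1]
    · rw [swp_app_other i h _ j g0 g1]
      unfold upd3
      simp [g0, g1]

lemma swp_upd3_right {k r : ℕ} (i : ℕ) (p : Fin k → Fin r) (u v w : Fin r)
    (h : i + 1 + 1 < k) : swp (i + 1) h (upd3 i p u v w) = upd3 i p u w v := by
  funext j
  by_cases g0 : (j : ℕ) = i + 1
  · have hj : j = (⟨i + 1, Nat.lt_of_succ_lt h⟩ : Fin k) := by simp [Fin.ext_iff, g0]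
    subst hj
    rw [swp_app0, upd3_app2, upd3_app1]
  · by_cases g1 : (j : ℕ) = i + 1 + 1
    · have hj : j = (⟨i + 1 + 1, h⟩ : Fin k) := by simp [Fin.ext_iff, g1]
      subst hj
      rw [swp_app1, upd3_app1, upd3_app2]
    · rw [swp_app_other (i+1) h _ j g0 g1]
      have g2 : ¬ ((j : ℕ) = i + 2) := by omega
      by_cases g3 : (j : ℕ) = i
      · unfold upd3; rw [if_pos g3, if_pos g3]
      · unfold upd3
        rw [if_neg g3, if_neg g0, if_neg g2, if_neg g3, if_neg g0, if_neg g2]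

lemma Bco1 (q : ℝ) {r : ℕ} (u v w : Fin r) :
    Ac q u v * Ac q u v * Ac q v w + Bc q u v * Ac q u w * Bc q v u =
      Ac q v w * Ac q v w * Ac q u v + Bc q v w * Ac q u w * Bc q w v := by
  unfold Ac Bc
  split_ifs <;> first | ring1 | (exfalso; omega)

lemma Bco2 (q : ℝ) {r : ℕ} (u v w : Fin r) :
    Ac q u v * Ac q v w * Bc q u v + Bc q u v * Ac q u w * Ac q v u =
      Ac q v w * Bc q u v * Ac q u w := by
  unfold Ac Bc
  split_ifs <;> first | ring1 | (exfalso; omega)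

lemma Bco3 (q : ℝ) {r : ℕ} (u v w : Fin r) :
    Ac q u v * Bc q v w * Ac q u w =
      Ac q v w * Ac q u v * Bc q v w + Bc q v w * Ac q u w * Ac q w v := by
  unfold Ac Bc
  split_ifs <;> first | ring1 | (exfalso; omega)

lemma braid_big (q : ℝ) (r k : ℕ) (i : ℕ) (hi : i + 1 + 1 < k) :
    RmatK q r k i (Nat.lt_of_succ_lt hi) * RmatK q r k (i + 1) hi *
        RmatK q r k i (Nat.lt_of_succ_lt hi) =
      RmatK q r k (i + 1) hi * RmatK q r k i (Nat.lt_of_succ_lt hi) *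
        RmatK q r k (i + 1) hi := by
  ext p p'
  suffices H : ∀ u v w : Fin r,
      (RmatK q r k i (Nat.lt_of_succ_lt hi) * RmatK q r k (i + 1) hi *
        RmatK q r k i (Nat.lt_of_succ_lt hi)) p (upd3 i p' u v w) =
      (RmatK q r k (i + 1) hi * RmatK q r k i (Nat.lt_of_succ_lt hi) *
        RmatK q r k (i + 1) hi) p (upd3 i p' u v w) by
    have h0 := H (p' ⟨i, by omega⟩) (p' ⟨i + 1, by omega⟩) (p' ⟨i + 2, by omega⟩)
    rwa [upd3_self] at h0
  intro u v w
  simp only [mul_RmatK, RmatK_apply, swp_upd3_left, swp_upd3_right,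
    upd3_app0, upd3_app1, upd3_app2]
  linear_combination (Bco1 q u v w) * dl p (upd3 i p' u v w) +
    (Bco2 q u v w) * dl p (upd3 i p' v u w) +
    (Bco3 q u v w) * dl p (upd3 i p' u w v)

/-- `Y_i(z,w) = f(z,w)⁻¹ (R_i + g(z,w))`. -/
noncomputable def Yop (q : ℝ) (r k : ℕ) (i : ℕ) (hi : i + 1 < k) (z w : ℂ) :
    Matrix (Fin k → Fin r) (Fin k → Fin r) ℂ :=
  (fqB q z w)⁻¹ • (RmatK q r k i hi + gqB q z w • (1 : Matrix (Fin k → Fin r) (Fin k → Fin r) ℂ))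

lemma yb_alg {n : Type*} [Fintype n] [DecidableEq n] (A B : Matrix n n ℂ) (t s a b c : ℂ)
    (hA : A * A = t • A + s • 1) (hB : B * B = t • B + s • 1)
    (hbr : A * B * A = B * A * B) (hs : b * t + a * b + b * c = a * c) :
    (A + a • 1) * (B + b • 1) * (A + c • 1) = (B + c • 1) * (A + b • 1) * (B + a • 1) := by
  simp only [add_mul, mul_add, smul_mul_assoc, mul_smul_comm, smul_smul, one_mul, mul_one,
    smul_add]
  rw [hA, hB, hbr]
  match_scalars <;> first | ring1 | linear_combination hs | linear_combination -hs

/-- The Yang–Baxter relation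
`Y_i(z₂,z₃) Y_{i+1}(z₁,z₃) Y_i(z₁,z₂) = Y_{i+1}(z₁,z₂) Y_i(z₁,z₃) Y_{i+1}(z₂,z₃)`. -/
theorem Yop_yang_baxter (q : ℝ) (hq : 0 < q) (hq1 : q < 1) (r k : ℕ) (hr : 0 < r)
    (hk : 3 ≤ k) (i : ℕ) (hi : i + 2 < k) (z₁ z₂ z₃ : ℂ)
    (h12 : z₁ ≠ z₂) (h13 : z₁ ≠ z₃) (h23 : z₂ ≠ z₃)
    (hf12 : z₁ ≠ (q:ℂ)^2 * z₂) (hf21 : z₂ ≠ (q:ℂ)^2 * z₁)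
    (hf13 : z₁ ≠ (q:ℂ)^2 * z₃) (hf31 : z₃ ≠ (q:ℂ)^2 * z₁)
    (hf23 : z₂ ≠ (q:ℂ)^2 * z₃) (hf32 : z₃ ≠ (q:ℂ)^2 * z₂) :
    Yop q r k i (Nat.lt_of_succ_lt hi) z₂ z₃ *
        Yop q r k (i + 1) hi z₁ z₃ *
        Yop q r k i (Nat.lt_of_succ_lt hi) z₁ z₂
      = Yop q r k (i + 1) hi z₁ z₂ *
          Yop q r k i (Nat.lt_of_succ_lt hi) z₁ z₃ *
          Yop q r k (i + 1) hi z₂ z₃ := by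
  have hi' : i + 1 + 1 < k := hi
  set A := RmatK q r k i (Nat.lt_of_succ_lt hi) with hAdef
  set B := RmatK q r k (i + 1) hi with hBdef
  have d12 : z₁ - z₂ ≠ 0 := sub_ne_zero.2 h12
  have d13 : z₁ - z₃ ≠ 0 := sub_ne_zero.2 h13
  have d23 : z₂ - z₃ ≠ 0 := sub_ne_zero.2 h23
  have hs : gqB q z₁ z₃ * (1 - (q:ℂ)^2) + gqB q z₂ z₃ * gqB q z₁ z₃ +
      gqB q z₁ z₃ * gqB q z₁ z₂ = gqB q z₂ z₃ * gqB q z₁ z₂ := by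
    unfold gqB
    field_simp
    ring
  have hA : A * A = (1 - (q:ℂ)^2) • A + (q:ℂ)^2 • 1 := hecke_big q r k i _
  have hB : B * B = (1 - (q:ℂ)^2) • B + (q:ℂ)^2 • 1 := hecke_big q r k (i + 1) hi
  have hbr : A * B * A = B * A * B := braid_big q r k i hi
  have key := yb_alg A B (1 - (q:ℂ)^2) ((q:ℂ)^2) (gqB q z₂ z₃) (gqB q z₁ z₃) (gqB q z₁ z₂)
    hA hB hbr hs
  unfold Yop
  rw [← hAdef, ← hBdef]
  simp only [smul_mul_assoc, mul_smul_comm, smul_smul]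
  rw [key]
  congr 1
  ring
end

section
/- Let r=1 and define C^{[M',M]}(z) as the (1,0)-entry (bottom-left) of the product L^{(M')}(z)···L^{(M)}(z) of 2×2 L-operators L^{(i)}(z) = [[1+z q^{2N_i}, β_i*],[z β_i, z]] with entries in the q-boson algebras at sites M',...,M. Then for any z, w, the operators C^{[M',M]}(z) and C^{[M',M]}(w) commute. -/
/-- Operators on the (coefficient realization of the) tensor product of Fock spaces
over the sites `i ∈ ℤ`: a state is an occupation function `m : ℤ → ℕ`, and a vector
is a coefficient function `v : (ℤ → ℕ) → ℂ`. -/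
abbrev QBOp : Type := ((ℤ → ℕ) → ℂ) → ((ℤ → ℕ) → ℂ)

/-- `q^{N_i}` at site `i`. -/
noncomputable def siteQN (q : ℝ) (i : ℤ) : QBOp := fun v m => (q:ℂ)^(m i) * v m

/-- `β_i*` at site `i`. -/
noncomputable def siteBetaStar (i : ℤ) : QBOp := fun v m =>
  if m i = 0 then 0 else v (Function.update m i (m i - 1))

/-- `β_i` at site `i`. -/
noncomputable def siteBeta (q : ℝ) (i : ℤ) : QBOp := fun v m =>
  (1 - (q:ℂ)^(2 * (m i + 1))) * v (Function.update m i (m i + 1))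

/-- Entry `L^{(i)}(z)_{00} = 1 + z q^{2N_i}`. -/
noncomputable def L00 (q : ℝ) (z : ℂ) (i : ℤ) : QBOp :=
  fun v => v + z • siteQN q i (siteQN q i v)

/-- Entry `L^{(i)}(z)_{01} = β_i*`. -/
noncomputable def L01 (i : ℤ) : QBOp := siteBetaStar i

/-- Entry `L^{(i)}(z)_{10} = z β_i`. -/
noncomputable def L10 (q : ℝ) (z : ℂ) (i : ℤ) : QBOp := fun v => z • siteBeta q i v

/-- Entry `L^{(i)}(z)_{11} = z`. -/
noncomputable def L11 (z : ℂ) : QBOp := fun v => z • v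

/-- The four entries `(T_{00}, T_{01}, T_{10}, T_{11})` of the monodromy matrix
`L^{(s)}(z) L^{(s+1)}(z) ⋯ L^{(s+n)}(z)`. -/
noncomputable def monodromy (q : ℝ) (z : ℂ) (s : ℤ) :
    ℕ → QBOp × QBOp × QBOp × QBOp
  | 0 => (L00 q z s, L01 s, L10 q z s, L11 z)
  | n + 1 =>
      let p := monodromy q z s n
      let j : ℤ := s + (n : ℤ) + 1
      (p.1 ∘ L00 q z j + p.2.1 ∘ L10 q z j,
       p.1 ∘ L01 j + p.2.1 ∘ L11 z,
       p.2.2.1 ∘ L00 q z j + p.2.2.2 ∘ L10 q z j,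
       p.2.2.1 ∘ L01 j + p.2.2.2 ∘ L11 z)

/-- `A^{[M',M]}(z)`, the `(0,0)`-entry of the monodromy matrix over `[M', M]`. -/
noncomputable def Aop (q : ℝ) (z : ℂ) (M' M : ℤ) : QBOp :=
  (monodromy q z M' (M - M').toNat).1

/-- `C^{[M',M]}(z)`, the `(1,0)`-entry of the monodromy matrix over `[M', M]`. -/
noncomputable def Cop (q : ℝ) (z : ℂ) (M' M : ℤ) : QBOp :=
  (monodromy q z M' (M - M').toNat).2.2.1


abbrev QBV : Type := (ℤ → ℕ) → ℂ
abbrev EE : Type := Module.End ℂ QBV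

noncomputable def localE (i : ℤ) (c : ℕ → ℂ) (g : ℕ → ℕ) : EE where
  toFun v := fun m => c (m i) * v (Function.update m i (g (m i)))
  map_add' u v := by funext m; simp [mul_add]
  map_smul' r v := by funext m; simp [smul_eq_mul]; ring

@[simp] lemma localE_apply (i : ℤ) (c : ℕ → ℂ) (g : ℕ → ℕ) (v : QBV) (m : ℤ → ℕ) :
    localE i c g v m = c (m i) * v (Function.update m i (g (m i))) := rfl

lemma localE_comm {i j : ℤ} (hij : i ≠ j) (c g c' g') :
    localE i c g * localE j c' g' = localE j c' g' * localE i c g := by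
  ext v m
  simp only [Module.End.mul_apply, localE_apply]
  rw [Function.update_of_ne hij.symm, Function.update_of_ne hij,
      Function.update_comm hij]
  ring

noncomputable def alE (q : ℝ) (i : ℤ) : EE :=
  localE i (fun n => 1 - (q:ℂ)^(2*(n+1))) (fun n => n+1)
noncomputable def beE (i : ℤ) : EE :=
  localE i (fun n => if n = 0 then 0 else 1) (fun n => n-1)
noncomputable def kaE (q : ℝ) (i : ℤ) : EE :=
  localE i (fun n => (q:ℂ)^(2*n)) id

lemma rel_ab (q : ℝ) (i : ℤ) : alE q i * beE i = 1 - ((q:ℂ)^2) • kaE q i := by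
  ext v m
  simp only [Module.End.mul_apply, alE, beE, kaE, localE_apply, LinearMap.sub_apply,
    LinearMap.smul_apply, Module.End.one_apply, Function.update_self, Function.update_idem,
    Nat.succ_ne_zero, if_false, Nat.add_sub_cancel, Function.update_eq_self,
    Pi.sub_apply, Pi.smul_apply, smul_eq_mul, id]
  rw [show 2*(m i + 1) = 2*(m i) + 2 by ring, pow_add]
  ring

lemma rel_ba (q : ℝ) (i : ℤ) : beE i * alE q i = 1 - kaE q i := by
  ext v m
  by_cases h : m i = 0
  · have hm : Function.update m i 0 = m := by rw [← h]; exact Function.update_eq_self i m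
    simp [Module.End.mul_apply, alE, beE, kaE, h, hm]
  · simp only [Module.End.mul_apply, alE, beE, kaE, localE_apply, LinearMap.sub_apply,
      Module.End.one_apply, h, if_false, Function.update_self, Function.update_idem,
      Pi.sub_apply, id]
    rw [Nat.sub_add_cancel (Nat.one_le_iff_ne_zero.mpr h), Function.update_eq_self]
    ring

lemma rel_ak (q : ℝ) (i : ℤ) : alE q i * kaE q i = ((q:ℂ)^2) • (kaE q i * alE q i) := by
  ext v m
  simp only [Module.End.mul_apply, alE, kaE, localE_apply, LinearMap.smul_apply,
    Function.update_self, Function.update_idem, Function.update_eq_self, Pi.smul_apply,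
    smul_eq_mul, id]
  rw [show 2*(m i + 1) = 2*(m i) + 2 by ring, pow_add]
  ring

lemma rel_kb (q : ℝ) (i : ℤ) : kaE q i * beE i = ((q:ℂ)^2) • (beE i * kaE q i) := by
  ext v m
  by_cases h : m i = 0
  · simp [Module.End.mul_apply, beE, kaE, h]
  · simp only [Module.End.mul_apply, beE, kaE, localE_apply, LinearMap.smul_apply,
      h, if_false, Function.update_self, Function.update_idem, Function.update_eq_self,
      Pi.smul_apply, smul_eq_mul, id]
    rw [show 2*(m i) = 2*(m i - 1) + 2 by omega, pow_add]
    ring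

section QStep
variable {A : Type*} [Ring A] [Algebra ℂ A]

lemma swap3 {x y : A} (h : x*y = y*x) (t : A) : y*(x*t) = x*(y*t) := by
  rw [← mul_assoc, ← h, mul_assoc]

lemma red3 {x y : A} {c : ℂ} (h : x*y = c•(y*x)) (t : A) :
    x*(y*t) = c•(y*(x*t)) := by
  rw [← mul_assoc, h, smul_mul_assoc, mul_assoc]

lemma red3' {x y k : A} {c : ℂ} (h : x*y = 1 - c•k) (t : A) :
    x*(y*t) = t - c•(k*t) := by
  rw [← mul_assoc, h, sub_mul, one_mul, smul_mul_assoc]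

lemma qstep (z w Qs : ℂ) (α β κ Cz Dz Cw Dw : A)
    (hαβ : α * β = 1 - Qs • κ) (hβα : β * α = 1 - κ)
    (hακ : α * κ = Qs • (κ * α)) (hκβ : κ * β = Qs • (β * κ))
    (hCzα : Cz * α = α * Cz) (hCzβ : Cz * β = β * Cz) (hCzκ : Cz * κ = κ * Cz)
    (hCwα : Cw * α = α * Cw) (hCwβ : Cw * β = β * Cw) (hCwκ : Cw * κ = κ * Cw)
    (hDzα : Dz * α = α * Dz) (hDzβ : Dz * β = β * Dz) (hDzκ : Dz * κ = κ * Dz)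
    (hDwα : Dw * α = α * Dw) (hDwβ : Dw * β = β * Dw) (hDwκ : Dw * κ = κ * Dw)
    (h1 : Cz * Cw = Cw * Cz) (h2 : Dz * Dw = Dw * Dz)
    (h3 : z • (Dz * Cw) + w • (Cz * Dw) = w • (Dw * Cz) + z • (Cw * Dz))
    (h4 : Cz * Dw + Qs • (Dz * Cw) = Cw * Dz + Qs • (Dw * Cz)) :
    ((Cz*(1+z•κ)+Dz*(z•α))*(Cw*(1+w•κ)+Dw*(w•α))
      = (Cw*(1+w•κ)+Dw*(w•α))*(Cz*(1+z•κ)+Dz*(z•α)))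
    ∧ ((Cz*β+Dz*(z•(1:A)))*(Cw*β+Dw*(w•(1:A)))
      = (Cw*β+Dw*(w•(1:A)))*(Cz*β+Dz*(z•(1:A))))
    ∧ (z • ((Cz*β+Dz*(z•(1:A)))*(Cw*(1+w•κ)+Dw*(w•α)))
        + w • ((Cz*(1+z•κ)+Dz*(z•α))*(Cw*β+Dw*(w•(1:A))))
      = w • ((Cw*β+Dw*(w•(1:A)))*(Cz*(1+z•κ)+Dz*(z•α)))
        + z • ((Cw*(1+w•κ)+Dw*(w•α))*(Cz*β+Dz*(z•(1:A)))))
    ∧ ((Cz*(1+z•κ)+Dz*(z•α))*(Cw*β+Dw*(w•(1:A)))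
        + Qs • ((Cz*β+Dz*(z•(1:A)))*(Cw*(1+w•κ)+Dw*(w•α)))
      = (Cw*(1+w•κ)+Dw*(w•α))*(Cz*β+Dz*(z•(1:A)))
        + Qs • ((Cw*β+Dw*(w•(1:A)))*(Cz*(1+z•κ)+Dz*(z•α)))) := by
  have hβα' : β * α = 1 - (1:ℂ) • κ := by rw [one_smul]; exact hβα
  have hS3 : z•(Dz*Cw) + w•(Cz*Dw) - w•(Dw*Cz) - z•(Cw*Dz) = 0 := by
    rw [h3]; abel
  have hS4 : Cz*Dw + Qs•(Dz*Cw) - Cw*Dz - Qs•(Dw*Cz) = 0 := by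
    rw [h4]; abel
  have key1 : (Cz*(1+z•κ)+Dz*(z•α))*(Cw*(1+w•κ)+Dw*(w•α))
      - (Cw*(1+w•κ)+Dw*(w•α))*(Cz*(1+z•κ)+Dz*(z•α))
      = (z•(Dz*Cw) + w•(Cz*Dw) - w•(Dw*Cz) - z•(Cw*Dz))*α
        + (z*w)•((Cz*Dw + Qs•(Dz*Cw) - Cw*Dz - Qs•(Dw*Cz))*(κ*α)) := by
    simp only [mul_add, add_mul, sub_mul, mul_sub, mul_one, one_mul,
      smul_mul_assoc, mul_smul_comm, smul_smul, smul_sub, smul_add, mul_assoc,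
      ← hCzα, ← hCzβ, ← hCzκ, ← hCwα, ← hCwβ, ← hCwκ,
      ← hDzα, ← hDzβ, ← hDzκ, ← hDwα, ← hDwβ, ← hDwκ,
      swap3 hCzα, swap3 hCzβ, swap3 hCzκ, swap3 hCwα, swap3 hCwβ, swap3 hCwκ,
      swap3 hDzα, swap3 hDzβ, swap3 hDzκ, swap3 hDwα, swap3 hDwβ, swap3 hDwκ,
      ← h1, ← h2, swap3 h1, swap3 h2,
      hακ, red3 hακ, hκβ, red3 hκβ, hαβ, red3' hαβ, hβα, red3' hβα']
    module
  have key2 : (Cz*β+Dz*(z•(1:A)))*(Cw*β+Dw*(w•(1:A)))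
      - (Cw*β+Dw*(w•(1:A)))*(Cz*β+Dz*(z•(1:A)))
      = (z•(Dz*Cw) + w•(Cz*Dw) - w•(Dw*Cz) - z•(Cw*Dz))*β := by
    simp only [mul_add, add_mul, sub_mul, mul_sub, mul_one, one_mul,
      smul_mul_assoc, mul_smul_comm, smul_smul, smul_sub, smul_add, mul_assoc,
      ← hCzα, ← hCzβ, ← hCzκ, ← hCwα, ← hCwβ, ← hCwκ,
      ← hDzα, ← hDzβ, ← hDzκ, ← hDwα, ← hDwβ, ← hDwκ,
      swap3 hCzα, swap3 hCzβ, swap3 hCzκ, swap3 hCwα, swap3 hCwβ, swap3 hCwκ,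
      swap3 hDzα, swap3 hDzβ, swap3 hDzκ, swap3 hDwα, swap3 hDwβ, swap3 hDwκ,
      ← h1, ← h2, swap3 h1, swap3 h2,
      hακ, red3 hακ, hκβ, red3 hκβ, hαβ, red3' hαβ, hβα, red3' hβα']
    module
  have key3 : z • ((Cz*β+Dz*(z•(1:A)))*(Cw*(1+w•κ)+Dw*(w•α)))
        + w • ((Cz*(1+z•κ)+Dz*(z•α))*(Cw*β+Dw*(w•(1:A))))
        - w • ((Cw*β+Dw*(w•(1:A)))*(Cz*(1+z•κ)+Dz*(z•α)))
        - z • ((Cw*(1+w•κ)+Dw*(w•α))*(Cz*β+Dz*(z•(1:A))))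
      = (z+w)•(z•(Dz*Cw) + w•(Cz*Dw) - w•(Dw*Cz) - z•(Cw*Dz))
        + (z*w)•(((z•(Dz*Cw) + w•(Cz*Dw) - w•(Dw*Cz) - z•(Cw*Dz))
            - (Cz*Dw + Qs•(Dz*Cw) - Cw*Dz - Qs•(Dw*Cz)))*κ) := by
    simp only [mul_add, add_mul, sub_mul, mul_sub, mul_one, one_mul,
      smul_mul_assoc, mul_smul_comm, smul_smul, smul_sub, smul_add, mul_assoc,
      ← hCzα, ← hCzβ, ← hCzκ, ← hCwα, ← hCwβ, ← hCwκ,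
      ← hDzα, ← hDzβ, ← hDzκ, ← hDwα, ← hDwβ, ← hDwκ,
      swap3 hCzα, swap3 hCzβ, swap3 hCzκ, swap3 hCwα, swap3 hCwβ, swap3 hCwκ,
      swap3 hDzα, swap3 hDzβ, swap3 hDzκ, swap3 hDwα, swap3 hDwβ, swap3 hDwκ,
      ← h1, ← h2, swap3 h1, swap3 h2,
      hακ, red3 hακ, hκβ, red3 hκβ, hαβ, red3' hαβ, hβα, red3' hβα']
    module
  have key4 : (Cz*(1+z•κ)+Dz*(z•α))*(Cw*β+Dw*(w•(1:A)))
        + Qs • ((Cz*β+Dz*(z•(1:A)))*(Cw*(1+w•κ)+Dw*(w•α)))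
        - (Cw*(1+w•κ)+Dw*(w•α))*(Cz*β+Dz*(z•(1:A)))
        - Qs • ((Cw*β+Dw*(w•(1:A)))*(Cz*(1+z•κ)+Dz*(z•α)))
      = (1+Qs)•(z•(Dz*Cw) + w•(Cz*Dw) - w•(Dw*Cz) - z•(Cw*Dz))
        + ((z*w)•(Cz*Dw + Qs•(Dz*Cw) - Cw*Dz - Qs•(Dw*Cz))
            - Qs•(z•(Dz*Cw) + w•(Cz*Dw) - w•(Dw*Cz) - z•(Cw*Dz)))*κ := by
    simp only [mul_add, add_mul, sub_mul, mul_sub, mul_one, one_mul,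
      smul_mul_assoc, mul_smul_comm, smul_smul, smul_sub, smul_add, mul_assoc,
      ← hCzα, ← hCzβ, ← hCzκ, ← hCwα, ← hCwβ, ← hCwκ,
      ← hDzα, ← hDzβ, ← hDzκ, ← hDwα, ← hDwβ, ← hDwκ,
      swap3 hCzα, swap3 hCzβ, swap3 hCzκ, swap3 hCwα, swap3 hCwβ, swap3 hCwκ,
      swap3 hDzα, swap3 hDzβ, swap3 hDzκ, swap3 hDwα, swap3 hDwβ, swap3 hDwκ,
      ← h1, ← h2, swap3 h1, swap3 h2,
      hακ, red3 hακ, hκβ, red3 hκβ, hαβ, red3' hαβ, hβα, red3' hβα']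
    module
  rw [hS3] at key1 key2 key3 key4
  rw [hS4] at key1 key3 key4
  simp only [zero_mul, smul_zero, mul_zero, zero_smul, add_zero, zero_sub, sub_zero,
    zero_add, neg_zero] at key1 key2 key3 key4
  rw [sub_sub] at key3 key4
  exact ⟨sub_eq_zero.mp key1, sub_eq_zero.mp key2, sub_eq_zero.mp key3,
    sub_eq_zero.mp key4⟩

end QStep

noncomputable def monodromyE (q : ℝ) (z : ℂ) (s : ℤ) : ℕ → EE × EE × EE × EE
  | 0 => (1 + z • kaE q s, beE s, z • alE q s, z • 1)
  | n + 1 =>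
      let p := monodromyE q z s n
      let j : ℤ := s + (n : ℤ) + 1
      (p.1 * (1 + z • kaE q j) + p.2.1 * (z • alE q j),
       p.1 * beE j + p.2.1 * (z • (1:EE)),
       p.2.2.1 * (1 + z • kaE q j) + p.2.2.2 * (z • alE q j),
       p.2.2.1 * beE j + p.2.2.2 * (z • (1:EE)))

lemma commute_of_eq {a b : EE} (h : a * b = b * a) : Commute a b := h

lemma localE_commute {i j : ℤ} (hij : i ≠ j) (c g c' g') :
    Commute (localE i c g) (localE j c' g') :=
  commute_of_eq (localE_comm hij c g c' g')

lemma monodromyE_commute (q : ℝ) (z : ℂ) (s : ℤ) : ∀ n : ℕ, ∀ j : ℤ,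
    s + (n : ℤ) < j → ∀ (c : ℕ → ℂ) (g : ℕ → ℕ),
    Commute (monodromyE q z s n).1 (localE j c g) ∧
    Commute (monodromyE q z s n).2.1 (localE j c g) ∧
    Commute (monodromyE q z s n).2.2.1 (localE j c g) ∧
    Commute (monodromyE q z s n).2.2.2 (localE j c g) := by
  intro n
  induction n with
  | zero =>
      intro j hj c g
      have hs : s ≠ j := by push_cast at hj; omega
      simp only [monodromyE]
      refine ⟨?_, ?_, ?_, ?_⟩
      · exact (Commute.one_left _).add_left ((localE_commute hs _ _ c g).smul_left z)
      · exact localE_commute hs _ _ c g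
      · exact (localE_commute hs _ _ c g).smul_left z
      · exact (Commute.one_left _).smul_left z
  | succ n ih =>
      intro j hj c g
      have hj' : s + (n : ℤ) < j := by push_cast at hj ⊢; omega
      have hne : s + (n : ℤ) + 1 ≠ j := by push_cast at hj; omega
      obtain ⟨h1, h2, h3, h4⟩ := ih j hj' c g
      have hk : Commute (kaE q (s + (n:ℤ) + 1)) (localE j c g) := localE_commute hne _ _ c g
      have ha : Commute (alE q (s + (n:ℤ) + 1)) (localE j c g) := localE_commute hne _ _ c g
      have hb : Commute (beE (s + (n:ℤ) + 1)) (localE j c g) := localE_commute hne _ _ c g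
      have hA : Commute (1 + z • kaE q (s + (n:ℤ) + 1)) (localE j c g) :=
        (Commute.one_left _).add_left (hk.smul_left z)
      have hD : Commute (z • (1:EE)) (localE j c g) := (Commute.one_left _).smul_left z
      exact ⟨(h1.mul_left hA).add_left (h2.mul_left (ha.smul_left z)),
        (h1.mul_left hb).add_left (h2.mul_left hD),
        (h3.mul_left hA).add_left (h4.mul_left (ha.smul_left z)),
        (h3.mul_left hb).add_left (h4.mul_left hD)⟩

lemma monodromyE_inv (q : ℝ) (z w : ℂ) (s : ℤ) : ∀ n : ℕ,
    (monodromyE q z s n).2.2.1 * (monodromyE q w s n).2.2.1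
      = (monodromyE q w s n).2.2.1 * (monodromyE q z s n).2.2.1 ∧
    (monodromyE q z s n).2.2.2 * (monodromyE q w s n).2.2.2
      = (monodromyE q w s n).2.2.2 * (monodromyE q z s n).2.2.2 ∧
    z • ((monodromyE q z s n).2.2.2 * (monodromyE q w s n).2.2.1)
      + w • ((monodromyE q z s n).2.2.1 * (monodromyE q w s n).2.2.2)
      = w • ((monodromyE q w s n).2.2.2 * (monodromyE q z s n).2.2.1)
      + z • ((monodromyE q w s n).2.2.1 * (monodromyE q z s n).2.2.2) ∧
    (monodromyE q z s n).2.2.1 * (monodromyE q w s n).2.2.2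
      + ((q:ℂ)^2) • ((monodromyE q z s n).2.2.2 * (monodromyE q w s n).2.2.1)
      = (monodromyE q w s n).2.2.1 * (monodromyE q z s n).2.2.2
      + ((q:ℂ)^2) • ((monodromyE q w s n).2.2.2 * (monodromyE q z s n).2.2.1) := by
  intro n
  induction n with
  | zero =>
      simp only [monodromyE]
      refine ⟨?_, ?_, ?_, ?_⟩ <;>
        · simp only [smul_mul_assoc, mul_smul_comm, smul_smul, mul_one, one_mul]
          module
  | succ n ih =>
      obtain ⟨h1, h2, h3, h4⟩ := ih
      set j : ℤ := s + (n : ℤ) + 1 with hjdef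
      have hjj : s + (n : ℤ) < j := by omega
      obtain ⟨_, _, hCzα', _⟩ := monodromyE_commute q z s n j hjj
        (fun n => 1 - (q:ℂ)^(2*(n+1))) (fun n => n+1)
      have comm := fun (z' : ℂ) => monodromyE_commute q z' s n j hjj
      have hCa := fun (z' : ℂ) => ((comm z') (fun n => 1 - (q:ℂ)^(2*(n+1))) (fun n => n+1)).2.2.1
      have hDa := fun (z' : ℂ) => ((comm z') (fun n => 1 - (q:ℂ)^(2*(n+1))) (fun n => n+1)).2.2.2
      have hCb := fun (z' : ℂ) => ((comm z') (fun n => if n = 0 then 0 else 1) (fun n => n-1)).2.2.1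
      have hDb := fun (z' : ℂ) => ((comm z') (fun n => if n = 0 then 0 else 1) (fun n => n-1)).2.2.2
      have hCk := fun (z' : ℂ) => ((comm z') (fun n => (q:ℂ)^(2*n)) id).2.2.1
      have hDk := fun (z' : ℂ) => ((comm z') (fun n => (q:ℂ)^(2*n)) id).2.2.2
      have main := qstep z w ((q:ℂ)^2) (alE q j) (beE j) (kaE q j)
        (monodromyE q z s n).2.2.1 (monodromyE q z s n).2.2.2
        (monodromyE q w s n).2.2.1 (monodromyE q w s n).2.2.2
        (rel_ab q j) (rel_ba q j) (rel_ak q j) (rel_kb q j)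
        (hCa z).eq (hCb z).eq (hCk z).eq
        (hCa w).eq (hCb w).eq (hCk w).eq
        (hDa z).eq (hDb z).eq (hDk z).eq
        (hDa w).eq (hDb w).eq (hDk w).eq
        h1 h2 h3 h4
      simpa only [monodromyE, ← hjdef] using main

lemma coe_L00 (q : ℝ) (z : ℂ) (i : ℤ) : L00 q z i = ⇑(1 + z • kaE q i) := by
  funext v m
  simp only [L00, kaE, siteQN, Pi.add_apply, Pi.smul_apply, LinearMap.add_apply,
    LinearMap.smul_apply, Module.End.one_apply, localE_apply, id, Function.update_eq_self,
    smul_eq_mul, two_mul, pow_add]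
  ring

lemma coe_L01 (i : ℤ) : L01 i = ⇑(beE i) := by
  funext v m
  by_cases h : m i = 0 <;> simp [L01, beE, siteBetaStar, h]

lemma coe_L10 (q : ℝ) (z : ℂ) (i : ℤ) : L10 q z i = ⇑(z • alE q i) := by
  funext v m
  simp [L10, alE, siteBeta, smul_eq_mul]

lemma coe_L11 (z : ℂ) : L11 z = ⇑(z • (1:EE)) := by
  funext v m
  simp [L11]

lemma coe_monodromy (q : ℝ) (z : ℂ) (s : ℤ) : ∀ n : ℕ,
    (monodromy q z s n).1 = ⇑(monodromyE q z s n).1 ∧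
    (monodromy q z s n).2.1 = ⇑(monodromyE q z s n).2.1 ∧
    (monodromy q z s n).2.2.1 = ⇑(monodromyE q z s n).2.2.1 ∧
    (monodromy q z s n).2.2.2 = ⇑(monodromyE q z s n).2.2.2 := by
  intro n
  induction n with
  | zero =>
      simp only [monodromy, monodromyE]
      exact ⟨coe_L00 q z s, coe_L01 s, coe_L10 q z s, coe_L11 z⟩
  | succ n ih =>
      obtain ⟨i1, i2, i3, i4⟩ := ih
      simp only [monodromy, monodromyE]
      refine ⟨?_, ?_, ?_, ?_⟩ <;>
      · funext v
        simp [i1, i2, i3, i4, coe_L00, coe_L01, coe_L10, coe_L11,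
          LinearMap.add_apply, Module.End.mul_apply, Pi.add_apply, Function.comp]

/-- The operators `C^{[M',M]}(z)` and `C^{[M',M]}(w)` commute. -/
theorem Cop_comm (q : ℝ) (hq : 0 < q) (hq1 : q < 1) (M' M : ℤ) (hMM : M' ≤ M)
    (z w : ℂ) :
    Cop q z M' M ∘ Cop q w M' M = Cop q w M' M ∘ Cop q z M' M := by
  have hc := (coe_monodromy q z M' ((M - M').toNat)).2.2.1
  have hc' := (coe_monodromy q w M' ((M - M').toNat)).2.2.1
  have h := (monodromyE_inv q z w M' ((M - M').toNat)).1
  unfold Cop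
  rw [hc, hc']
  funext v
  simp only [Function.comp_apply]
  rw [← Module.End.mul_apply, ← Module.End.mul_apply, h]
end
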